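/- Under the hypotheses of the density ratio lemma — f(y|α,β) ≤ C and ℓ(α,β) ≤ ℓ₀ + η^⊤(α,λβ) + (L/2)(‖α‖₂² + λ²‖β‖₂²) — define the Gaussian initial density ω_{η,L}(α,β) as the density of (A, B) where (A, λB) ~ N(−V_L η, V_L) with V_L = diag(I_d/(L+θ²), I_p/(L+1)). Then for all (α, β), log ω_{η,L}(α,β) − log π(α,β | y) ≤ (d/2) log(L/θ² + 1) + (p/2) log(L+1) − (p/2) log(2π) − (1/2) η^⊤ V_L η + log C + p log 2 + ℓ₀ + p/2. -/

import Mathlib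

open MeasureTheory Real

set_option maxHeartbeats 1000000

lemma aux_integral_exp_abs {lam : ℝ} (hlam : 0 < lam) :
    ∫ x : ℝ, Real.exp (-(lam * |x|)) = 2 / lam := by
  rw [integral_comp_abs (f := fun x => Real.exp (-(lam * x)))]
  have := integral_comp_mul_left_Ioi (fun x => Real.exp (-x)) 0 hlam
  simp only [mul_zero, smul_eq_mul] at this
  rw [this, integral_exp_neg_Ioi_zero, mul_one]
  rw [eq_div_iff hlam.ne']
  field_simp

lemma aux_integrable_exp_abs {lam : ℝ} (hlam : 0 < lam) :
    Integrable (fun x : ℝ => Real.exp (-(lam * |x|))) := by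
  by_contra h
  have h0 := integral_undef h
  rw [aux_integral_exp_abs hlam] at h0
  exact (by positivity : (0:ℝ) < 2 / lam).ne' h0

theorem warm_start_log_ratio_bound {d p : ℕ} {θ lam C ℓ₀ L : ℝ}
    (hθ : 0 < θ) (hlam : 0 < lam) (hC : 0 < C) (hL : 0 ≤ L)
    (ηa : Fin d → ℝ) (ηb : Fin p → ℝ)
    (f : (Fin d → ℝ) × (Fin p → ℝ) → ℝ)
    (hfpos : ∀ w, 0 < f w) (hfm : Measurable f) (hfC : ∀ w, f w ≤ C)
    (hℓ : ∀ w : (Fin d → ℝ) × (Fin p → ℝ),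
      -Real.log (f w) ≤ ℓ₀ + ((∑ j, ηa j * w.1 j) + ∑ j, ηb j * (lam * w.2 j))
        + L / 2 * ((∑ j, w.1 j ^ 2) + lam ^ 2 * ∑ j, w.2 j ^ 2))
    (Z : ℝ)
    (hZ : Z = ∫ w : (Fin d → ℝ) × (Fin p → ℝ),
      f w * Real.exp (-θ ^ 2 * (∑ j, w.1 j ^ 2) / 2 - lam * ∑ j, |w.2 j|))
    (piPost : (Fin d → ℝ) × (Fin p → ℝ) → ℝ)
    (hpi : ∀ w, piPost w =
      f w * Real.exp (-θ ^ 2 * (∑ j, w.1 j ^ 2) / 2 - lam * ∑ j, |w.2 j|) / Z)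
    (ω : (Fin d → ℝ) × (Fin p → ℝ) → ℝ)
    (hω : ∀ w, ω w =
      ((L + θ ^ 2) / (2 * π)) ^ ((d : ℝ) / 2) * ((L + 1) / (2 * π)) ^ ((p : ℝ) / 2)
        * lam ^ p
        * Real.exp (-(1 / 2) *
            ((L + θ ^ 2) * (∑ j, (w.1 j + ηa j / (L + θ ^ 2)) ^ 2)
              + (L + 1) * ∑ j, (lam * w.2 j + ηb j / (L + 1)) ^ 2))) :
    ∀ w : (Fin d → ℝ) × (Fin p → ℝ),
      Real.log (ω w) - Real.log (piPost w)
        ≤ (d : ℝ) / 2 * Real.log (L / θ ^ 2 + 1) + (p : ℝ) / 2 * Real.log (L + 1)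
          - (p : ℝ) / 2 * Real.log (2 * π)
          - (1 / 2) * ((∑ j, ηa j ^ 2 / (L + θ ^ 2)) + ∑ j, ηb j ^ 2 / (L + 1))
          + Real.log C + (p : ℝ) * Real.log 2 + ℓ₀ + (p : ℝ) / 2 := by
  have hπ : (0:ℝ) < π := Real.pi_pos
  have h2π : (0:ℝ) < 2 * π := by linarith
  have hθ2 : (0:ℝ) < θ ^ 2 := by positivity
  have hLθ : (0:ℝ) < L + θ ^ 2 := by linarith
  have hL1 : (0:ℝ) < L + 1 := by linarith
  have hb2 : (0:ℝ) < θ ^ 2 / 2 := by positivity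
  -- 1D integrals
  have hIa : Integrable (fun x : ℝ => Real.exp (-(θ ^ 2 / 2) * x ^ 2)) :=
    integrable_exp_neg_mul_sq hb2
  have hIaval : ∫ x : ℝ, Real.exp (-(θ ^ 2 / 2) * x ^ 2) = Real.sqrt (π / (θ ^ 2 / 2)) :=
    integral_gaussian _
  have hIb : Integrable (fun x : ℝ => Real.exp (-(lam * |x|))) := aux_integrable_exp_abs hlam
  have hIbval : ∫ x : ℝ, Real.exp (-(lam * |x|)) = 2 / lam := aux_integral_exp_abs hlam
  -- product integrals
  have hGa : Integrable (fun a : Fin d → ℝ => ∏ j, Real.exp (-(θ ^ 2 / 2) * (a j) ^ 2)) :=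
    Integrable.fintype_prod (fun _ => hIa)
  have hGb : Integrable (fun b : Fin p → ℝ => ∏ j, Real.exp (-(lam * |b j|))) :=
    Integrable.fintype_prod (fun _ => hIb)
  have hGaval : ∫ a : Fin d → ℝ, ∏ j, Real.exp (-(θ ^ 2 / 2) * (a j) ^ 2)
      = Real.sqrt (π / (θ ^ 2 / 2)) ^ d := by
    rw [integral_fintype_prod_volume_eq_pow (ι := Fin d) (fun x : ℝ => Real.exp (-(θ ^ 2 / 2) * x ^ 2)),
      hIaval, Fintype.card_fin]
  have hGbval : ∫ b : Fin p → ℝ, ∏ j, Real.exp (-(lam * |b j|)) = (2 / lam) ^ p := by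
    rw [integral_fintype_prod_volume_eq_pow (ι := Fin p) (fun x : ℝ => Real.exp (-(lam * |x|))),
      hIbval, Fintype.card_fin]
  have hG : Integrable (fun w : (Fin d → ℝ) × (Fin p → ℝ) =>
      (∏ j, Real.exp (-(θ ^ 2 / 2) * (w.1 j) ^ 2)) * ∏ j, Real.exp (-(lam * |w.2 j|))) := by
    rw [Measure.volume_eq_prod]
    exact Integrable.mul_prod hGa hGb
  have hGval : ∫ w : (Fin d → ℝ) × (Fin p → ℝ),
      (∏ j, Real.exp (-(θ ^ 2 / 2) * (w.1 j) ^ 2)) * ∏ j, Real.exp (-(lam * |w.2 j|))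
      = Real.sqrt (π / (θ ^ 2 / 2)) ^ d * (2 / lam) ^ p := by
    rw [Measure.volume_eq_prod, integral_prod_mul
      (f := fun a : Fin d → ℝ => ∏ j, Real.exp (-(θ ^ 2 / 2) * (a j) ^ 2))
      (g := fun b : Fin p → ℝ => ∏ j, Real.exp (-(lam * |b j|))), hGaval, hGbval]
  have hGpos : ∀ w : (Fin d → ℝ) × (Fin p → ℝ),
      0 < (∏ j, Real.exp (-(θ ^ 2 / 2) * (w.1 j) ^ 2)) * ∏ j, Real.exp (-(lam * |w.2 j|)) :=
    fun w => by apply mul_pos <;> exact Finset.prod_pos fun _ _ => Real.exp_pos _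
  have hE : ∀ w : (Fin d → ℝ) × (Fin p → ℝ),
      Real.exp (-θ ^ 2 * (∑ j, w.1 j ^ 2) / 2 - lam * ∑ j, |w.2 j|)
      = (∏ j, Real.exp (-(θ ^ 2 / 2) * (w.1 j) ^ 2)) * ∏ j, Real.exp (-(lam * |w.2 j|)) := by
    intro w
    rw [← Real.exp_sum, ← Real.exp_sum, ← Real.exp_add]
    congr 1
    simp only [neg_mul, Finset.sum_neg_distrib, ← Finset.mul_sum]
    ring
  -- Z bounds
  have hZle : Z ≤ C * (Real.sqrt (π / (θ ^ 2 / 2)) ^ d * (2 / lam) ^ p) := by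
    rw [hZ, ← hGval, ← integral_const_mul]
    apply integral_mono_of_nonneg
    · exact Filter.Eventually.of_forall fun w =>
        mul_nonneg (hfpos w).le (Real.exp_pos _).le
    · exact hG.const_mul C
    · refine Filter.Eventually.of_forall fun w => ?_
      show f w * _ ≤ C * _
      rw [hE w]
      exact mul_le_mul_of_nonneg_right (hfC w) (hGpos w).le
  have hZint : Integrable (fun w : (Fin d → ℝ) × (Fin p → ℝ) =>
      f w * Real.exp (-θ ^ 2 * (∑ j, w.1 j ^ 2) / 2 - lam * ∑ j, |w.2 j|)) := by
    refine (hG.const_mul C).mono' ?_ (Filter.Eventually.of_forall fun w => ?_)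
    · refine (hfm.mul ?_).aestronglyMeasurable
      fun_prop
    · rw [Real.norm_eq_abs, abs_of_pos (mul_pos (hfpos w) (Real.exp_pos _)), hE w]
      exact mul_le_mul_of_nonneg_right (hfC w) (hGpos w).le
  have hZpos : (0:ℝ) < Z := by
    rw [hZ]
    rw [integral_pos_iff_support_of_nonneg
      (fun w => le_of_lt (mul_pos (hfpos w) (Real.exp_pos _))) hZint]
    have hsupp : Function.support (fun w : (Fin d → ℝ) × (Fin p → ℝ) =>
        f w * Real.exp (-θ ^ 2 * (∑ j, w.1 j ^ 2) / 2 - lam * ∑ j, |w.2 j|)) = Set.univ :=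
      Set.eq_univ_of_forall fun w => (mul_pos (hfpos w) (Real.exp_pos _)).ne'
    rw [hsupp]
    exact isOpen_univ.measure_pos volume ⟨(0, 0), trivial⟩
  -- log Z bound
  have hlogZ : Real.log Z ≤ Real.log C + (d : ℝ) * ((Real.log (2 * π) - 2 * Real.log θ) / 2)
      + (p : ℝ) * (Real.log 2 - Real.log lam) := by
    have h1 : Real.log Z ≤ Real.log (C * (Real.sqrt (π / (θ ^ 2 / 2)) ^ d * (2 / lam) ^ p)) :=
      Real.log_le_log hZpos hZle
    have harg : π / (θ ^ 2 / 2) = 2 * π / θ ^ 2 := by field_simp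
    rw [Real.log_mul hC.ne' (by positivity), Real.log_mul (by positivity) (by positivity),
      Real.log_pow, Real.log_pow, harg, Real.log_sqrt (by positivity),
      Real.log_div h2π.ne' hθ2.ne', Real.log_div (by norm_num) hlam.ne',
      show Real.log (θ ^ 2) = 2 * Real.log θ by rw [Real.log_pow]; norm_num] at h1
    linarith
  intro w
  have hℓw := hℓ w
  have hpiw := hpi w
  have hωw := hω w
  obtain ⟨S, hSdef⟩ : ∃ S, (∑ j, w.1 j ^ 2) = S := ⟨_, rfl⟩
  obtain ⟨Sb, hSbdef⟩ : ∃ Sb, (∑ j, w.2 j ^ 2) = Sb := ⟨_, rfl⟩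
  obtain ⟨T, hTdef⟩ : ∃ T, (∑ j, |w.2 j|) = T := ⟨_, rfl⟩
  obtain ⟨Ea, hEadef⟩ : ∃ Ea, (∑ j, ηa j * w.1 j) = Ea := ⟨_, rfl⟩
  obtain ⟨Eb, hEbdef⟩ : ∃ Eb, (∑ j, ηb j * (lam * w.2 j)) = Eb := ⟨_, rfl⟩
  obtain ⟨Na, hNadef⟩ : ∃ Na, (∑ j, ηa j ^ 2 / (L + θ ^ 2)) = Na := ⟨_, rfl⟩
  obtain ⟨Nb, hNbdef⟩ : ∃ Nb, (∑ j, ηb j ^ 2 / (L + 1)) = Nb := ⟨_, rfl⟩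
  obtain ⟨QA, hQAdef⟩ : ∃ QA, (∑ j, (w.1 j + ηa j / (L + θ ^ 2)) ^ 2) = QA := ⟨_, rfl⟩
  obtain ⟨QB, hQBdef⟩ : ∃ QB, (∑ j, (lam * w.2 j + ηb j / (L + 1)) ^ 2) = QB := ⟨_, rfl⟩
  -- expansions
  have hQA : (L + θ ^ 2) * QA = L * S + θ ^ 2 * S + 2 * Ea + Na := by
    have hterm : ∀ j : Fin d, (L + θ ^ 2) * (w.1 j + ηa j / (L + θ ^ 2)) ^ 2
        = (L * w.1 j ^ 2 + θ ^ 2 * w.1 j ^ 2) + (2 * (ηa j * w.1 j) + ηa j ^ 2 / (L + θ ^ 2)) :=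
      fun j => by field_simp; ring
    subst hQAdef hSdef hEadef hNadef
    simp only [Finset.mul_sum, ← Finset.sum_add_distrib]
    exact Finset.sum_congr rfl fun j _ => by field_simp; ring
  have hQB : (L + 1) * QB = L * (lam ^ 2 * Sb) + lam ^ 2 * Sb + 2 * Eb + Nb := by
    have hterm : ∀ j : Fin p, (L + 1) * (lam * w.2 j + ηb j / (L + 1)) ^ 2
        = (L * (lam ^ 2 * w.2 j ^ 2) + lam ^ 2 * w.2 j ^ 2)
          + (2 * (ηb j * (lam * w.2 j)) + ηb j ^ 2 / (L + 1)) :=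
      fun j => by field_simp; ring
    subst hQBdef hSbdef hEbdef hNbdef
    simp only [Finset.mul_sum, ← Finset.sum_add_distrib]
    exact Finset.sum_congr rfl fun j _ => by field_simp; ring
  -- Young's inequality for the L1 term
  have hT : lam * T ≤ (lam ^ 2 * Sb + p) / 2 := by
    rw [← hTdef, ← hSbdef, Finset.mul_sum]
    calc ∑ j, lam * |w.2 j| ≤ ∑ j, ((lam * w.2 j) ^ 2 + 1) / 2 := by
          refine Finset.sum_le_sum fun j _ => ?_
          have h1 : lam * |w.2 j| = |lam * w.2 j| := by
            rw [abs_mul, abs_of_pos hlam]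
          rw [h1]
          nlinarith [sq_nonneg (|lam * w.2 j| - 1), sq_abs (lam * w.2 j)]
      _ = (lam ^ 2 * ∑ j, w.2 j ^ 2 + p) / 2 := by
          simp only [mul_pow, ← Finset.sum_div]
          rw [Finset.sum_add_distrib, Finset.sum_const, Finset.card_univ, Fintype.card_fin,
            nsmul_eq_mul, mul_one, Finset.mul_sum]
  -- log of ω
  rw [hSdef, hTdef] at hpiw
  rw [hQAdef, hQBdef] at hωw
  rw [hSdef, hSbdef, hEadef, hEbdef] at hℓw
  have hrw1 : Real.log (ω w) = (d : ℝ) / 2 * (Real.log (L + θ ^ 2) - Real.log (2 * π))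
      + (p : ℝ) / 2 * (Real.log (L + 1) - Real.log (2 * π)) + (p : ℝ) * Real.log lam
      + (-(1 / 2) * ((L + θ ^ 2) * QA + (L + 1) * QB)) := by
    rw [hωw]
    rw [Real.log_mul (by positivity) (Real.exp_ne_zero _),
      Real.log_mul (by positivity) (by positivity),
      Real.log_mul (by positivity) (by positivity),
      Real.log_exp, Real.log_rpow (by positivity), Real.log_rpow (by positivity),
      Real.log_pow, Real.log_div hLθ.ne' h2π.ne', Real.log_div hL1.ne' h2π.ne']
  -- log of π
  have hrw2 : Real.log (piPost w) = Real.log (f w) + (-θ ^ 2 * S / 2 - lam * T) - Real.log Z := by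
    rw [hpiw, Real.log_div (mul_pos (hfpos w) (Real.exp_pos _)).ne' hZpos.ne',
      Real.log_mul (hfpos w).ne' (Real.exp_ne_zero _), Real.log_exp]
  have hloglhs : Real.log (L / θ ^ 2 + 1) = Real.log (L + θ ^ 2) - 2 * Real.log θ := by
    rw [show L / θ ^ 2 + 1 = (L + θ ^ 2) / θ ^ 2 by field_simp,
      Real.log_div hLθ.ne' hθ2.ne', Real.log_pow]
    norm_num
  rw [hNadef, hNbdef, hloglhs, hrw1, hrw2]
  have hexp : L / 2 * (S + lam ^ 2 * Sb) = (L * S) / 2 + (L * (lam ^ 2 * Sb)) / 2 := by ring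
  linarith
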